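/- Let J(q,t) = E2(t) q² + E1(t) q a + E0(t) a² + E♯(t) where E2(t) = tanh(T-t), E1(t) = 2(1 - sech(T-t)), E0(t) = (T-t) - tanh(T-t), and E♯(t) = log cosh(T-t). Then with u = -(1/2) ∂_q J, the function J satisfies the HJB equation 0 = ∂_t J + q² + u² + (a + u) ∂_q J + (1/2) ∂_q² J for all q ∈ ℝ, t ∈ [0,T], together with J(q,T) = 0. -/

import Mathlib

open Real

lemma hasDerivAt_tanh' (x : ℝ) : HasDerivAt Real.tanh (1 / Real.cosh x ^ 2) x := by
  have hc := Real.cosh_pos x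
  have h : HasDerivAt (fun y => Real.sinh y / Real.cosh y)
      ((Real.cosh x * Real.cosh x - Real.sinh x * Real.sinh x) / Real.cosh x ^ 2) x :=
    (Real.hasDerivAt_sinh x).div (Real.hasDerivAt_cosh x) hc.ne'
  have hfun : Real.tanh = fun y => Real.sinh y / Real.cosh y :=
    funext fun y => Real.tanh_eq_sinh_div_cosh y
  rw [hfun]
  convert h using 1
  have := Real.cosh_sq_sub_sinh_sq x
  field_simp
  nlinarith [this]

theorem stmt_5 (T a : ℝ) (hT : 0 < T) (J : ℝ → ℝ → ℝ) (u : ℝ → ℝ → ℝ)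
    (hJ : ∀ q t, J q t =
      Real.tanh (T - t) * q ^ 2 + 2 * (1 - 1 / Real.cosh (T - t)) * q * a +
        ((T - t) - Real.tanh (T - t)) * a ^ 2 + Real.log (Real.cosh (T - t)))
    (hu : ∀ q t, u q t = -(1 / 2) * deriv (fun p => J p t) q) :
    (∀ q : ℝ, ∀ t ∈ Set.Icc (0 : ℝ) T,
      0 = deriv (fun s => J q s) t + q ^ 2 + (u q t) ^ 2 +
        (a + u q t) * deriv (fun p => J p t) q +
        (1 / 2) * deriv (fun p => deriv (fun p' => J p' t) p) q) ∧
    (∀ q : ℝ, J q T = 0) := by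
  -- spatial derivative
  have hq : ∀ (t q : ℝ), HasDerivAt (fun p => J p t)
      (2 * Real.tanh (T - t) * q + 2 * (1 - 1 / Real.cosh (T - t)) * a) q := by
    intro t q
    have hfun : (fun p => J p t) = fun p =>
        Real.tanh (T - t) * p ^ 2 + 2 * (1 - 1 / Real.cosh (T - t)) * p * a +
          ((T - t) - Real.tanh (T - t)) * a ^ 2 + Real.log (Real.cosh (T - t)) :=
      funext fun p => hJ p t
    rw [hfun]
    have h1 : HasDerivAt (fun p : ℝ => Real.tanh (T - t) * p ^ 2)
        (Real.tanh (T - t) * (2 * q)) q := by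
      simpa using (hasDerivAt_pow 2 q).const_mul (Real.tanh (T - t))
    have h2 : HasDerivAt (fun p : ℝ => 2 * (1 - 1 / Real.cosh (T - t)) * p * a)
        (2 * (1 - 1 / Real.cosh (T - t)) * a) q := by
      simpa [mul_comm, mul_assoc, mul_left_comm] using
        ((hasDerivAt_id q).const_mul (2 * (1 - 1 / Real.cosh (T - t)))).mul_const a
    have h := ((h1.add h2).add_const (((T - t) - Real.tanh (T - t)) * a ^ 2)).add_const
      (Real.log (Real.cosh (T - t)))
    refine h.congr_deriv ?_
    ring
  have hqderiv : ∀ (t q : ℝ), deriv (fun p => J p t) q =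
      2 * Real.tanh (T - t) * q + 2 * (1 - 1 / Real.cosh (T - t)) * a :=
    fun t q => (hq t q).deriv
  -- second spatial derivative
  have hqq : ∀ (t q : ℝ), deriv (fun p => deriv (fun p' => J p' t) p) q
      = 2 * Real.tanh (T - t) := by
    intro t q
    have hfun : (fun p => deriv (fun p' => J p' t) p) = fun p =>
        2 * Real.tanh (T - t) * p + 2 * (1 - 1 / Real.cosh (T - t)) * a :=
      funext fun p => hqderiv t p
    rw [hfun]
    have h : HasDerivAt (fun p : ℝ =>
        2 * Real.tanh (T - t) * p + 2 * (1 - 1 / Real.cosh (T - t)) * a)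
        (2 * Real.tanh (T - t)) q := by
      simpa using ((hasDerivAt_id q).const_mul (2 * Real.tanh (T - t))).add_const
        (2 * (1 - 1 / Real.cosh (T - t)) * a)
    exact h.deriv
  -- time derivative
  have ht : ∀ (q t : ℝ), HasDerivAt (fun s => J q s)
      (-(1 / Real.cosh (T - t) ^ 2) * q ^ 2
        + 2 * (-(Real.tanh (T - t) / Real.cosh (T - t))) * q * a
        + (-1 + 1 / Real.cosh (T - t) ^ 2) * a ^ 2
        + -Real.tanh (T - t)) t := by
    intro q t
    have hfun : (fun s => J q s) = fun s =>
        Real.tanh (T - s) * q ^ 2 + 2 * (1 - 1 / Real.cosh (T - s)) * q * a +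
          ((T - s) - Real.tanh (T - s)) * a ^ 2 + Real.log (Real.cosh (T - s)) :=
      funext fun s => hJ q s
    rw [hfun]
    have hlin : HasDerivAt (fun s : ℝ => T - s) (-1) t := by
      simpa using (hasDerivAt_id t).const_sub T
    have htanh : HasDerivAt (fun s : ℝ => Real.tanh (T - s))
        (-(1 / Real.cosh (T - t) ^ 2)) t := by
      exact ((hasDerivAt_tanh' (T - t)).comp t hlin).congr_deriv (by ring)
    have hcosh : HasDerivAt (fun s : ℝ => Real.cosh (T - s)) (-Real.sinh (T - t)) t := by
      exact ((Real.hasDerivAt_cosh (T - t)).comp t hlin).congr_deriv (by ring)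
    have hcpos := Real.cosh_pos (T - t)
    have hsech : HasDerivAt (fun s : ℝ => 1 - 1 / Real.cosh (T - s))
        (-(Real.tanh (T - t) / Real.cosh (T - t))) t := by
      have hinv : HasDerivAt (fun s : ℝ => (Real.cosh (T - s))⁻¹)
          (-(-Real.sinh (T - t)) / Real.cosh (T - t) ^ 2) t := hcosh.inv hcpos.ne'
      have h := hinv.const_sub 1
      simp only [one_div]
      refine h.congr_deriv ?_
      rw [Real.tanh_eq_sinh_div_cosh]
      ring
    have hlog : HasDerivAt (fun s : ℝ => Real.log (Real.cosh (T - s)))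
        (-Real.sinh (T - t) / Real.cosh (T - t)) t := hcosh.log hcpos.ne'
    have h1 : HasDerivAt (fun s : ℝ => Real.tanh (T - s) * q ^ 2)
        (-(1 / Real.cosh (T - t) ^ 2) * q ^ 2) t := htanh.mul_const _
    have h2 : HasDerivAt (fun s : ℝ => 2 * (1 - 1 / Real.cosh (T - s)) * q * a)
        (2 * (-(Real.tanh (T - t) / Real.cosh (T - t))) * q * a) t := by
      have := ((hsech.const_mul 2).mul_const q).mul_const a
      convert this using 1
    have h3 : HasDerivAt (fun s : ℝ => ((T - s) - Real.tanh (T - s)) * a ^ 2)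
        ((-1 + 1 / Real.cosh (T - t) ^ 2) * a ^ 2) t := by
      have := (hlin.sub htanh).mul_const (a ^ 2)
      refine this.congr_deriv ?_
      ring
    have h := ((h1.add h2).add h3).add hlog
    refine h.congr_deriv ?_
    rw [Real.tanh_eq_sinh_div_cosh]
    ring
  constructor
  · intro q t _
    rw [(ht q t).deriv, hqderiv, hqq, hu, hqderiv]
    have hcpos := Real.cosh_pos (T - t)
    have hid := Real.cosh_sq_sub_sinh_sq (T - t)
    have hx : Real.tanh (T - t) ^ 2 + (1 / Real.cosh (T - t)) ^ 2 = 1 := by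
      rw [Real.tanh_eq_sinh_div_cosh]
      field_simp
      linarith [hid]
    have hd : Real.tanh (T - t) / Real.cosh (T - t)
        = Real.tanh (T - t) * (1 / Real.cosh (T - t)) := by ring
    rw [hd]
    linear_combination q ^ 2 * hx
  · intro q
    rw [hJ]
    simp
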